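/- Let T be a linearly ordered set. Then there exists a commutative integral domain A that is a valuation ring such that Spec(A), ordered by inclusion, is order-isomorphic to D(T). -/

import Mathlib

universe u

namespace Stmt14Aux

open HahnSeries

variable {T : Type u} [LinearOrder T]

/-- The lexicographic value group, with a pinned instance to avoid diamonds. -/
def Gam (T : Type u) [LinearOrder T] : Type u := Lex (T →₀ ℤ)

noncomputable instance : AddCommGroup (Gam T) :=
  inferInstanceAs (AddCommGroup (Lex (T →₀ ℤ)))

noncomputable instance : LinearOrder (Gam T) :=
  inferInstanceAs (LinearOrder (Lex (T →₀ ℤ)))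

instance : IsOrderedAddMonoid (Gam T) :=
  inferInstanceAs (IsOrderedAddMonoid (Lex (T →₀ ℤ)))

/-- The Hahn series field. -/
abbrev K (T : Type u) [LinearOrder T] : Type u := HahnSeries (Gam T) ℚ

def gam : (T →₀ ℤ) → Gam T := toLex
def ung : Gam T → (T →₀ ℤ) := ofLex

theorem gam_ung (g : Gam T) : gam (ung g) = g := rfl
theorem ung_gam (a : T →₀ ℤ) : ung (gam a) = a := rfl
theorem gam_add (a b : T →₀ ℤ) : gam (a + b) = gam a + gam b := rfl
theorem ung_add (a b : Gam T) : ung (a + b) = ung a + ung b := rfl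
theorem gam_neg (a : T →₀ ℤ) : gam (-a) = - gam a := rfl
theorem gam_zero : (gam 0 : Gam T) = 0 := rfl
theorem ung_zero : (ung 0 : T →₀ ℤ) = 0 := rfl
theorem gam_smul (n : ℕ) (a : T →₀ ℤ) : gam (n • a) = n • gam a := rfl
theorem gam_mono : Monotone (gam (T := T)) := Finsupp.toLex_monotone
theorem gam_inj : Function.Injective (gam (T := T)) := toLex.injective

theorem gam_lt {a b : T →₀ ℤ} {j : T} (h1 : ∀ d < j, a d = b d) (h2 : a j < b j) :
    gam a < gam b := ⟨j, h1, h2⟩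

theorem gam_lt_elim {a b : T →₀ ℤ} (h : gam a < gam b) :
    ∃ j, (∀ d < j, a d = b d) ∧ a j < b j := h

theorem gam_nonneg {a : T →₀ ℤ} (h : 0 ≤ a) : 0 ≤ gam a := gam_mono h

/-- The membership condition for the valuation subring attached to a set `U`. -/
def Cond (U : Set T) (g : Gam T) : Prop :=
  ∃ h : T →₀ ℤ, 0 ≤ h ∧ ↑h.support ⊆ U ∧ 0 ≤ g + gam h

theorem Cond.mono_set {U U' : Set T} (hU : U ⊆ U') {g} (h : Cond U g) : Cond U' g :=
  let ⟨h₀, h1, h2, h3⟩ := h; ⟨h₀, h1, fun t ht => hU (h2 ht), h3⟩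

theorem Cond.mono {U : Set T} {g g' : Gam T} (hgg : g ≤ g') (h : Cond U g) :
    Cond U g' :=
  let ⟨h₀, h1, h2, h3⟩ := h; ⟨h₀, h1, h2, le_trans h3 (add_le_add hgg le_rfl)⟩

theorem Cond.of_nonneg {U : Set T} {g : Gam T} (hg : 0 ≤ g) : Cond U g :=
  ⟨0, le_rfl, by simp, by simpa [gam_zero] using hg⟩

theorem Cond.add {U : Set T} {g g' : Gam T} (h : Cond U g) (h' : Cond U g') :
    Cond U (g + g') := by
  obtain ⟨a, a1, a2, a3⟩ := h
  obtain ⟨b, b1, b2, b3⟩ := h'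
  refine ⟨a + b, add_nonneg a1 b1, ?_, ?_⟩
  · intro t ht
    rcases Finset.mem_union.mp (Finsupp.support_add ht) with h | h
    · exact a2 h
    · exact b2 h
  · have := add_nonneg a3 b3
    have e : g + gam a + (g' + gam b) = g + g' + gam (a + b) := by
      rw [gam_add, add_add_add_comm]
    rwa [e] at this

theorem order_inv {x : K T} (hx : x ≠ 0) : x⁻¹.order = -x.order := by
  have hinv : x⁻¹ ≠ 0 := inv_ne_zero hx
  have h1 : (x * x⁻¹).order = x.order + x⁻¹.order := order_mul hx hinv
  rw [mul_inv_cancel₀ hx, order_one] at h1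
  exact eq_neg_of_add_eq_zero_right h1.symm

/-- The valuation subring attached to a set `U ⊆ T`. -/
def Sring (U : Set T) : ValuationSubring (K T) where
  carrier := {x | x = 0 ∨ Cond U x.order}
  zero_mem' := Or.inl rfl
  one_mem' := Or.inr (by rw [order_one]; exact Cond.of_nonneg le_rfl)
  add_mem' := by
    rintro x y (rfl | hx) (rfl | hy)
    · simpa using Or.inl rfl
    · simpa using Or.inr hy
    · simpa using Or.inr hx
    · rcases eq_or_ne (x + y) 0 with h | h
      · exact Or.inl h
      · refine Or.inr ?_
        have hmin : min x.order y.order ≤ (x + y).order := min_order_le_order_add h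
        rcases le_total x.order y.order with hle | hle
        · exact hx.mono (le_trans (by simp [hle]) hmin)
        · exact hy.mono (le_trans (by simp [hle]) hmin)
  neg_mem' := by
    rintro x (rfl | hx)
    · simpa using Or.inl rfl
    · exact Or.inr (by rwa [order_neg])
  mul_mem' := by
    rintro x y (rfl | hx) (rfl | hy)
    · exact Or.inl (zero_mul 0)
    · exact Or.inl (zero_mul y)
    · exact Or.inl (mul_zero x)
    · rcases eq_or_ne x 0 with rfl | hx0
      · exact Or.inl (zero_mul y)
      rcases eq_or_ne y 0 with rfl | hy0
      · exact Or.inl (mul_zero x)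
      exact Or.inr (by rw [order_mul hx0 hy0]; exact hx.add hy)
  mem_or_inv_mem' := by
    intro x
    rcases eq_or_ne x 0 with rfl | hx0
    · exact Or.inl (Or.inl rfl)
    rcases le_total 0 x.order with h | h
    · exact Or.inl (Or.inr (Cond.of_nonneg h))
    · refine Or.inr (Or.inr ?_)
      rw [order_inv hx0]
      exact Cond.of_nonneg (neg_nonneg.mpr h)

theorem mem_Sring {U : Set T} {x : K T} : x ∈ Sring U ↔ x = 0 ∨ Cond U x.order := Iff.rfl

theorem Sring_mono {U U' : Set T} (h : U ⊆ U') : Sring U ≤ Sring U' := by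
  rintro x (rfl | hx)
  · exact Or.inl rfl
  · exact Or.inr (hx.mono_set h)

/-- The base valuation subring. -/
noncomputable def A (T : Type u) [LinearOrder T] : ValuationSubring (K T) :=
  Sring (∅ : Set T)

theorem mem_A_iff {x : K T} : x ∈ A T ↔ x = 0 ∨ 0 ≤ x.order := by
  constructor
  · rintro (rfl | ⟨h, h1, h2, h3⟩)
    · exact Or.inl rfl
    · have : h = 0 := by
        ext t
        by_contra ht
        exact (h2 (Finsupp.mem_support_iff.mpr fun hc => ht (by simp [hc])) : t ∈ (∅ : Set T))
      refine Or.inr ?_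
      rw [this] at h3
      simpa [gam_zero] using h3
  · rintro (rfl | hx)
    · exact Or.inl rfl
    · exact Or.inr (Cond.of_nonneg hx)

theorem A_le_Sring (U : Set T) : A T ≤ Sring U := Sring_mono (Set.empty_subset U)

/-- Key lemma: an overring of `A` is upward closed in order. -/
theorem mem_of_le_order {S : ValuationSubring (K T)} (hS : A T ≤ S) {x y : K T}
    (hx : x ≠ 0) (hxS : x ∈ S) (hy : y ≠ 0) (hord : x.order ≤ y.order) : y ∈ S := by
  have hxy : x⁻¹ * y ≠ 0 := mul_ne_zero (inv_ne_zero hx) hy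
  have hmem : x⁻¹ * y ∈ A T := by
    rw [mem_A_iff]
    refine Or.inr ?_
    rw [order_mul (inv_ne_zero hx) hy, order_inv hx]
    rw [← sub_eq_neg_add, sub_nonneg]
    exact hord
  have heq : x * (x⁻¹ * y) = y := by
    rw [← mul_assoc, mul_inv_cancel₀ hx, one_mul]
  exact heq ▸ S.mul_mem _ _ hxS (hS hmem)

/-- The indicator finsupp. -/
noncomputable def dl (t : T) : T →₀ ℤ := Finsupp.single t 1

/-- The canonical monomial with exponent `-δ t`. -/
noncomputable def xt (t : T) : K T := HahnSeries.single (gam (-(dl t))) (1 : ℚ)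

theorem xt_ne_zero (t : T) : xt t ≠ 0 := HahnSeries.single_ne_zero one_ne_zero

theorem xt_order (t : T) : (xt t).order = gam (-(dl t)) := order_single one_ne_zero

theorem dl_self (t : T) : dl t t = 1 := Finsupp.single_eq_same

theorem dl_other {t d : T} (h : d ≠ t) : dl t d = 0 := Finsupp.single_eq_of_ne h

theorem xt_mem {U : Set T} {t : T} (ht : t ∈ U) : xt t ∈ Sring U := by
  refine Or.inr ⟨dl t, ?_, ?_, ?_⟩
  · intro d
    rcases eq_or_ne d t with rfl | hd
    · simp [dl_self]
    · simp [dl_other hd]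
  · intro d hd
    have : d = t := by
      by_contra hc
      exact (Finsupp.mem_support_iff.mp hd) (dl_other hc)
    exact this ▸ ht
  · rw [xt_order, ← gam_add, neg_add_cancel, gam_zero]

theorem xt_not_mem {U : Set T} (hU : IsUpperSet U) {t : T} (ht : t ∉ U) :
    xt t ∉ Sring U := by
  rintro (h | ⟨h, h1, h2, h3⟩)
  · exact xt_ne_zero t h
  rw [xt_order, ← gam_add] at h3
  have hneg : gam (-(dl t) + h) < gam 0 := by
    refine gam_lt (j := t) ?_ ?_
    · intro d hd
      have hdl : dl t d = 0 := dl_other (ne_of_lt hd)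
      have hh : h d = 0 := by
        by_contra hc
        exact ht (hU (le_of_lt hd) (h2 (Finsupp.mem_support_iff.mpr hc)))
      simp [hdl, hh]
    · have hh : h t = 0 := by
        by_contra hc
        exact ht (h2 (Finsupp.mem_support_iff.mpr hc))
      simp [dl_self, hh]
  rw [gam_zero] at hneg
  exact absurd h3 (not_le.mpr hneg)

/-- The upper set attached to an overring. -/
def US (S : ValuationSubring (K T)) : Set T := {t | xt t ∈ S}

theorem US_upper {S : ValuationSubring (K T)} (hS : A T ≤ S) : IsUpperSet (US S) := by
  intro t t' htt' ht
  rcases eq_or_lt_of_le htt' with rfl | hlt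
  · exact ht
  have : (xt t).order ≤ (xt t').order := by
    rw [xt_order, xt_order]
    refine le_of_lt (gam_lt (j := t) ?_ ?_)
    · intro d hd
      rw [Finsupp.neg_apply, Finsupp.neg_apply, dl_other (ne_of_lt hd),
        dl_other (ne_of_lt (lt_trans hd hlt))]
    · rw [Finsupp.neg_apply, Finsupp.neg_apply, dl_self, dl_other (ne_of_lt hlt)]
      norm_num
  exact mem_of_le_order hS (xt_ne_zero t) ht (xt_ne_zero t') this

theorem US_Sring {U : Set T} (hU : IsUpperSet U) : US (Sring U) = U := by
  ext t
  constructor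
  · intro ht
    by_contra hc
    exact xt_not_mem hU hc ht
  · exact fun ht => xt_mem ht

theorem single_neg_mem {S : ValuationSubring (K T)} (hS : A T ≤ S) (h : T →₀ ℤ)
    (h0 : 0 ≤ h) (hsupp : ↑h.support ⊆ US S) :
    HahnSeries.single (gam (-h)) (1 : ℚ) ∈ S := by
  revert h0 hsupp
  induction h using Finsupp.induction with
  | zero =>
    intro _ _
    rw [neg_zero, gam_zero, HahnSeries.single_zero_one]
    exact S.one_mem
  | single_add a b f haf hb IH =>
    intro h0 hsupp
    have hfa : f a = 0 := Finsupp.notMem_support_iff.mp haf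
    have happ : (Finsupp.single a b + f) a = b := by
      rw [Finsupp.add_apply, Finsupp.single_eq_same, hfa, add_zero]
    have hb0 : 0 < b := by
      have := Finsupp.le_def.mp h0 a
      rw [Finsupp.zero_apply, happ] at this
      exact lt_of_le_of_ne this (Ne.symm hb)
    have hf0 : 0 ≤ f := by
      rw [Finsupp.le_def]
      intro d
      rcases eq_or_ne d a with rfl | hd
      · rw [Finsupp.zero_apply, hfa]
      · have := Finsupp.le_def.mp h0 d
        rwa [Finsupp.zero_apply, Finsupp.add_apply,
          Finsupp.single_eq_of_ne hd, zero_add] at this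
    have hfsub : ↑f.support ⊆ US S := by
      intro d hd
      have hd' : d ∈ f.support := hd
      have hda : d ≠ a := fun hc => haf (hc ▸ hd')
      refine hsupp ?_
      have : d ∈ (Finsupp.single a b + f).support := by
        rw [Finsupp.mem_support_iff, Finsupp.add_apply,
          Finsupp.single_eq_of_ne hda, zero_add]
        exact Finsupp.mem_support_iff.mp hd'
      exact this
    have haU : a ∈ US S := by
      refine hsupp ?_
      have : a ∈ (Finsupp.single a b + f).support := by
        rw [Finsupp.mem_support_iff, happ]; exact hb
      exact this
    have hexp : (-(Finsupp.single a b + f)) = b.toNat • (-(dl a)) + (-f) := by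
      have hcast : (b.toNat : ℤ) = b := Int.toNat_of_nonneg hb0.le
      rw [smul_neg, neg_add]
      congr 1
      rw [dl, Finsupp.smul_single]
      congr 1
      rw [nsmul_eq_mul, mul_one, hcast]
    have key : HahnSeries.single (gam (-(Finsupp.single a b + f))) (1 : ℚ)
        = xt a ^ b.toNat * HahnSeries.single (gam (-f)) 1 := by
      rw [xt, HahnSeries.single_pow, one_pow, HahnSeries.single_mul_single, one_mul,
        ← gam_smul, ← gam_add, hexp]
    rw [key]
    exact S.mul_mem _ _ (pow_mem haU b.toNat) (IH hf0 hfsub)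

theorem Sring_US {S : ValuationSubring (K T)} (hS : A T ≤ S) : Sring (US S) = S := by
  apply le_antisymm
  · -- Sring (US S) ≤ S
    rintro x (rfl | ⟨h, h0, hsupp, hge⟩)
    · exact S.zero_mem
    rcases eq_or_ne x 0 with rfl | hx0
    · exact S.zero_mem
    have hy : HahnSeries.single (gam (-h)) (1 : ℚ) ∈ S := single_neg_mem hS h h0 hsupp
    refine mem_of_le_order hS (HahnSeries.single_ne_zero one_ne_zero) hy hx0 ?_
    rw [order_single one_ne_zero, gam_neg]
    rw [neg_le_iff_add_nonneg]
    exact hge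
  · -- S ≤ Sring (US S)
    intro x hx
    rcases eq_or_ne x 0 with rfl | hx0
    · exact Or.inl rfl
    refine Or.inr ?_
    rcases le_or_gt 0 x.order with hord | hord
    · exact Cond.of_nonneg hord
    -- x.order < 0
    set a : T →₀ ℤ := ung x.order with ha
    have hga : gam a = x.order := gam_ung _
    have hane : a ≠ 0 := by
      intro hc
      rw [hc, gam_zero] at hga
      rw [← hga] at hord
      exact lt_irrefl 0 hord
    have hsne : a.support.Nonempty := Finsupp.support_nonempty_iff.mpr hane
    set m : T := a.support.min' hsne with hm
    have hmem_m : m ∈ a.support := a.support.min'_mem hsne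
    have hmin : ∀ d ∈ a.support, m ≤ d := fun d hd => a.support.min'_le d hd
    have hlow : ∀ d < m, a d = 0 := by
      intro d hd
      by_contra hc
      exact absurd (hmin d (Finsupp.mem_support_iff.mpr hc)) (not_le.mpr hd)
    have ham : a m < 0 := by
      obtain ⟨j, hj1, hj2⟩ := gam_lt_elim (a := a) (b := 0) (by rw [gam_zero, hga]; exact hord)
      rw [Finsupp.zero_apply] at hj2
      have hjm : j = m := by
        have hjs : j ∈ a.support := Finsupp.mem_support_iff.mpr (ne_of_lt hj2)
        refine le_antisymm ?_ (hmin j hjs)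
        by_contra hc
        exact Finsupp.mem_support_iff.mp hmem_m (by simpa using hj1 m (not_le.mp hc))
      exact hjm ▸ hj2
    -- xt m ∈ S
    have hxxS : x * x ∈ S := S.mul_mem _ _ hx hx
    have hxx0 : x * x ≠ 0 := mul_ne_zero hx0 hx0
    have hordle : (x * x).order ≤ (xt m).order := by
      rw [order_mul hx0 hx0, xt_order, ← hga, ← gam_add]
      refine le_of_lt (gam_lt (j := m) ?_ ?_)
      · intro d hd
        rw [Finsupp.add_apply, hlow d hd, add_zero, Finsupp.neg_apply,
          dl_other (ne_of_lt hd), neg_zero]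
      · rw [Finsupp.add_apply, Finsupp.neg_apply, dl_self]
        omega
    have hmU : m ∈ US S := mem_of_le_order hS hxx0 hxxS (xt_ne_zero m) hordle
    -- build the witness
    refine ⟨a.mapRange (fun n => max (-n) 0) (by simp), ?_, ?_, ?_⟩
    · rw [Finsupp.le_def]
      intro d
      rw [Finsupp.zero_apply, Finsupp.mapRange_apply]
      exact le_max_right _ _
    · intro d hd
      have hd' : d ∈ a.support := Finsupp.support_mapRange (by exact hd)
      exact US_upper hS (hmin d hd') hmU
    · rw [← hga, ← gam_add]
      refine gam_nonneg ?_
      rw [Finsupp.le_def]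
      intro d
      rw [Finsupp.zero_apply, Finsupp.add_apply, Finsupp.mapRange_apply]
      omega

/-- The order isomorphism between dual lower sets and overrings of `A`. -/
noncomputable def iso2 : (LowerSet T)ᵒᵈ ≃o {S : ValuationSubring (K T) // A T ≤ S} where
  toFun L := ⟨Sring ((OrderDual.ofDual L : LowerSet T) : Set T)ᶜ, A_le_Sring _⟩
  invFun S := OrderDual.toDual ⟨(US ↑S)ᶜ, (US_upper S.2).compl⟩
  left_inv L := by
    have hU : IsUpperSet (((OrderDual.ofDual L : LowerSet T) : Set T)ᶜ) :=
      (OrderDual.ofDual L : LowerSet T).lower.compl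
    have := US_Sring hU
    apply OrderDual.ofDual.injective
    ext t
    simp only [this]
    simp
  right_inv S := by
    apply Subtype.ext
    show Sring ((US ↑S)ᶜ)ᶜ = (S : ValuationSubring (K T))
    rw [compl_compl]
    exact Sring_US S.2
  map_rel_iff' := by
    intro L L'
    constructor
    · intro hle
      show OrderDual.ofDual L' ≤ OrderDual.ofDual L
      intro t ht
      by_contra hc
      have h1 : xt t ∈ Sring ((OrderDual.ofDual L : LowerSet T) : Set T)ᶜ := xt_mem hc
      have h2 := hle h1
      exact xt_not_mem ((OrderDual.ofDual L' : LowerSet T).lower.compl)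
        (by simpa using ht) h2
    · intro hle
      exact Sring_mono (Set.compl_subset_compl.mpr hle)

/-- The main order isomorphism. -/
noncomputable def mainIso : PrimeSpectrum (A T) ≃o LowerSet T :=
  ((OrderIso.dualDual (PrimeSpectrum (A T))).trans
    (((ValuationSubring.primeSpectrumOrderEquiv (A T)).trans (iso2 (T := T)).symm).dual)).trans
    (OrderIso.dualDual (LowerSet T)).symm

end Stmt14Aux

theorem stmt14 (T : Type u) [LinearOrder T] :
    ∃ (A : Type u) (_ : CommRing A) (_ : IsDomain A),
      ValuationRing A ∧ Nonempty (PrimeSpectrum A ≃o LowerSet T) := by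
  exact ⟨Stmt14Aux.A T, inferInstance, inferInstance, inferInstance, ⟨Stmt14Aux.mainIso⟩⟩
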